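/- arXiv:1407.8415 — 5 statements merged into one kernel-verified Lean document; each statement's English description precedes it below -/
import Mathlib

section
/- Let q > 2 be a prime power and n ≥ 1. Let S be an F_q-linear subspace of F_{q^n} containing 1, and suppose that for all nonzero x, z ∈ S with x ≠ z and all t ∈ F_q, the element (t·x·z)/(z + (t−1)·x) lies in S whenever z + (t−1)·x ≠ 0. Then for all nonzero x, y ∈ S, the element x²/y lies in S. -/
theorem stmt1 (q n : ℕ) (hq : 2 < q) (hn : 1 ≤ n)
    (K L : Type) [Field K] [Field L] [Fintype K] [Fintype L] [Algebra K L]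
    (hK : Fintype.card K = q) (hL : Fintype.card L = q ^ n)
    (S : Submodule K L) (h1 : (1 : L) ∈ S)
    (hcl : ∀ x ∈ S, ∀ z ∈ S, x ≠ 0 → z ≠ 0 → x ≠ z → ∀ t : K,
      z + (algebraMap K L t - 1) * x ≠ 0 →
      algebraMap K L t * x * z / (z + (algebraMap K L t - 1) * x) ∈ S) :
    ∀ x ∈ S, ∀ y ∈ S, x ≠ 0 → y ≠ 0 → x ^ 2 / y ∈ S := by
  classical
  intro x hx y hy hx0 hy0
  have hinj : Function.Injective (algebraMap K L) := (algebraMap K L).injective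
  by_cases hk : ∃ k : K, y = algebraMap K L k * x
  · obtain ⟨k, rfl⟩ := hk
    have hk0 : (algebraMap K L) k ≠ 0 := by
      intro h; apply hy0; rw [h, zero_mul]
    have hk0' : k ≠ 0 := by
      intro h; apply hk0; rw [h, map_zero]
    have : x ^ 2 / (algebraMap K L k * x) = k⁻¹ • x := by
      rw [Algebra.smul_def, map_inv₀]
      field_simp
    rw [this]
    exact S.smul_mem _ hx
  · have hr : ∃ r : K, r ≠ 0 ∧ r ≠ -1 := by
      by_contra hcon
      push_neg at hcon
      have hsub : (Finset.univ : Finset K) ⊆ ({0, -1} : Finset K) := by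
        intro a _
        by_cases h : a = 0
        · simp [h]
        · simp [hcon a h]
      have h2 : Fintype.card K ≤ 2 := by
        calc Fintype.card K = Finset.univ.card := rfl
          _ ≤ ({0, -1} : Finset K).card := Finset.card_le_card hsub
          _ ≤ 2 := (Finset.card_insert_le _ _).trans (by simp)
      omega
    obtain ⟨r, hr0, hr1⟩ := hr
    set c := algebraMap K L r with hc
    have hc0 : c ≠ 0 := by
      intro h; exact hr0 (hinj (by rw [map_zero]; exact h))
    have hc1 : c + 1 ≠ 0 := by
      intro h
      apply hr1
      apply hinj
      rw [map_neg, map_one]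
      linear_combination h
    have hb : y - c * x ∈ S := by
      have := S.smul_mem r hx
      rw [Algebra.smul_def] at this
      exact S.sub_mem hy this
    have hb0 : y - c * x ≠ 0 := by
      intro h
      exact hk ⟨r, by linear_combination h⟩
    have hxb : x ≠ y - c * x := by
      intro h
      apply hk
      refine ⟨r + 1, ?_⟩
      rw [map_add, map_one]
      linear_combination -h
    have hdeq : (y - c * x) + (algebraMap K L (r + 1) - 1) * x = y := by
      rw [map_add, map_one]; ring
    have hden : (y - c * x) + (algebraMap K L (r + 1) - 1) * x ≠ 0 := by
      rw [hdeq]; exact hy0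
    have hu := hcl x hx (y - c * x) hb hx0 hb0 hxb (r + 1) hden
    have hmem : (-(r * (r + 1)))⁻¹ •
        (algebraMap K L (r + 1) * x * (y - c * x) /
          ((y - c * x) + (algebraMap K L (r + 1) - 1) * x) - (r + 1) • x) ∈ S :=
      S.smul_mem _ (S.sub_mem hu (S.smul_mem _ hx))
    have key : x ^ 2 / y = (-(r * (r + 1)))⁻¹ •
        (algebraMap K L (r + 1) * x * (y - c * x) /
          ((y - c * x) + (algebraMap K L (r + 1) - 1) * x) - (r + 1) • x) := by
      rw [Algebra.smul_def, Algebra.smul_def, hdeq]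
      simp only [map_inv₀, map_neg, map_mul, map_add, map_one, ← hc]
      field_simp
      ring
    rw [key]
    exact hmem
end

section
/- Let q = 2^h with h ≥ 1 and let n ≥ 1. Let S be an F_q-linear subspace of F_{q^n} containing 1 such that for all nonzero x, y ∈ S, the element x²/y lies in S. Then S is closed under multiplication, and hence S is a subfield of F_{q^n} containing F_q. -/
theorem stmt4 (q n h : ℕ) (hh : 1 ≤ h) (hqe : q = 2 ^ h) (hn : 1 ≤ n)
    (K L : Type) [Field K] [Field L] [Fintype K] [Fintype L] [Algebra K L]
    (hK : Fintype.card K = q) (hL : Fintype.card L = q ^ n)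
    (S : Submodule K L) (h1 : (1 : L) ∈ S)
    (hcl : ∀ x ∈ S, ∀ y ∈ S, x ≠ 0 → y ≠ 0 → x ^ 2 / y ∈ S) :
    (∀ v ∈ S, ∀ w ∈ S, v * w ∈ S) ∧
    ∃ F : Subfield L, (S : Set L) = ↑F ∧ Set.range (algebraMap K L) ⊆ ↑F := by
  -- characteristic of L is 2
  obtain ⟨p, hp⟩ := CharP.exists L
  haveI := hp
  have hpprime : p.Prime := CharP.char_is_prime L p
  haveI := Fact.mk hpprime
  obtain ⟨m, hm⟩ := FiniteField.card L p
  have hp2 : p = 2 := by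
    have hdvd : p ∣ 2 ^ (h * n) := by
      have : (2:ℕ) ^ (h * n) = Fintype.card L := by
        rw [hL, hqe, pow_mul]
      rw [this, hm.2]
      exact dvd_pow_self p m.pos.ne'
    have h2 : p ∣ 2 := hpprime.dvd_of_dvd_pow hdvd
    exact (Nat.prime_dvd_prime_iff_eq hpprime Nat.prime_two).mp h2
  haveI : CharP L 2 := hp2 ▸ hp
  -- squaring is injective on L
  have hsqinj : Function.Injective (fun x : L => x ^ 2) := by
    have := frobenius_inj L 2
    intro a b hab
    exact this (by simpa [frobenius_def] using hab)
  -- S closed under squaring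
  have hsq : ∀ x ∈ S, x ^ 2 ∈ S := by
    intro x hx
    rcases eq_or_ne x 0 with rfl | hx0
    · simpa using S.zero_mem
    · simpa using hcl x hx 1 h1 hx0 one_ne_zero
  -- squaring S → S is surjective
  have hsqrt : ∀ v ∈ S, ∃ u ∈ S, u ^ 2 = v := by
    intro v hv
    have : Function.Surjective (fun x : S => (⟨x.1 ^ 2, hsq x.1 x.2⟩ : S)) := by
      apply Finite.surjective_of_injective
      intro a b hab
      exact Subtype.ext (hsqinj (congrArg Subtype.val hab))
    obtain ⟨u, hu⟩ := this ⟨v, hv⟩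
    exact ⟨u.1, u.2, congrArg Subtype.val hu⟩
  -- multiplicative closure
  have hmul : ∀ v ∈ S, ∀ w ∈ S, v * w ∈ S := by
    intro v hv w hw
    rcases eq_or_ne v 0 with rfl | hv0
    · simpa using S.zero_mem
    rcases eq_or_ne w 0 with rfl | hw0
    · simpa using S.zero_mem
    obtain ⟨u, hu, hu2⟩ := hsqrt v hv
    have hu0 : u ≠ 0 := by
      rintro rfl; exact hv0 (by simpa using hu2.symm)
    have hdiv : v / w ∈ S := by
      have := hcl u hu w hw hu0 hw0
      rwa [hu2] at this
    have hdiv0 : v / w ≠ 0 := div_ne_zero hv0 hw0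
    have := hcl v hv (v / w) hdiv hv0 hdiv0
    have heq : v ^ 2 / (v / w) = v * w := by
      field_simp
    rwa [heq] at this
  refine ⟨hmul, {
      carrier := S
      mul_mem' := fun ha hb => hmul _ ha _ hb
      one_mem' := h1
      add_mem' := fun ha hb => S.add_mem ha hb
      zero_mem' := S.zero_mem
      neg_mem' := fun ha => S.neg_mem ha
      inv_mem' := by
        intro a ha
        rcases eq_or_ne a 0 with rfl | ha0
        · simpa using S.zero_mem
        · have := hcl 1 h1 a ha one_ne_zero ha0
          simpa [one_div] using this }, rfl, ?_⟩
  rintro x ⟨c, rfl⟩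
  show algebraMap K L c ∈ S
  rw [Algebra.algebraMap_eq_smul_one]
  exact S.smul_mem c h1
end

section
/- Let q > 2 be a prime power and n ≥ 1. Let S be a subset of F_{q^n} with 0, 1 ∈ S, such that S is an F_q-affine-combination-closed set and for all nonzero distinct x, z ∈ S and t ∈ F_q with z + (t−1)x ≠ 0, the element t·x·z/(z + (t−1)x) lies in S. Then S is a subfield of F_{q^n}, i.e., S = F_{q^t} for some divisor t of n. -/
theorem stmt5 (q n : ℕ) (hq : 2 < q) (hn : 1 ≤ n)
    (K L : Type) [Field K] [Field L] [Fintype K] [Fintype L] [Algebra K L]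
    (hK : Fintype.card K = q) (hL : Fintype.card L = q ^ n)
    (S : Set L) (h0 : (0 : L) ∈ S) (h1 : (1 : L) ∈ S)
    (haff : ∀ x ∈ S, ∀ y ∈ S, ∀ t : K,
      (1 - algebraMap K L t) * x + algebraMap K L t * y ∈ S)
    (hcl : ∀ x ∈ S, ∀ z ∈ S, x ≠ 0 → z ≠ 0 → x ≠ z → ∀ t : K,
      z + (algebraMap K L t - 1) * x ≠ 0 →
      algebraMap K L t * x * z / (z + (algebraMap K L t - 1) * x) ∈ S) :
    ∃ F : Subfield L, S = ↑F ∧ ∃ t : ℕ, t ∣ n ∧ Nat.card F = q ^ t := by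
  set φ := algebraMap K L with hφdef
  have hφinj : Function.Injective φ := (algebraMap K L).injective
  -- K-scalar multiples
  have hscal : ∀ (t : K), ∀ y ∈ S, φ t * y ∈ S := by
    intro t y hy
    simpa using haff 0 h0 y hy t
  have hKmem : ∀ t : K, φ t ∈ S := fun t => by simpa using hscal t 1 h1
  -- existence of elements of K avoiding two values
  have hex : ∀ a b : K, ∃ c : K, c ≠ a ∧ c ≠ b := by
    classical
    intro a b
    by_contra h
    push_neg at h
    have hsub : (Finset.univ : Finset K) ⊆ ({a, b} : Finset K) := by
      intro c _
      rcases eq_or_ne c a with rfl | hca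
      · exact Finset.mem_insert_self _ _
      · rw [h c hca]
        exact Finset.mem_insert_of_mem (Finset.mem_singleton_self b)
    have hcard := Finset.card_le_card hsub
    have hle : ({a, b} : Finset K).card ≤ 2 :=
      le_trans (Finset.card_insert_le _ _) (by simp)
    rw [Finset.card_univ, hK] at hcard
    omega
  -- additive closure
  have hadd : ∀ x ∈ S, ∀ y ∈ S, x + y ∈ S := by
    intro x hx y hy
    obtain ⟨t, ht0, ht1⟩ := hex 0 1
    have hx' := hscal (1 - t)⁻¹ x hx
    have hy' := hscal t⁻¹ y hy
    have hmem := haff _ hx' _ hy' t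
    have h1t : (1 : K) - t ≠ 0 := sub_ne_zero.mpr (Ne.symm ht1)
    have e : (1 - φ t) * (φ (1 - t)⁻¹ * x) + φ t * (φ t⁻¹ * y) = x + y := by
      rw [show (1 : L) - φ t = φ (1 - t) by rw [map_sub, map_one]]
      rw [← mul_assoc, ← mul_assoc, ← map_mul, ← map_mul, mul_inv_cancel₀ h1t,
        mul_inv_cancel₀ ht0, map_one, one_mul, one_mul]
    rwa [e] at hmem
  have hneg : ∀ x ∈ S, -x ∈ S := by
    intro x hx
    have := hscal (-1) x hx
    simpa using this
  have hsub : ∀ x ∈ S, ∀ y ∈ S, x - y ∈ S := fun x hx y hy => by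
    simpa [sub_eq_add_neg] using hadd x hx (-y) (hneg y hy)
  -- closure under inversion
  have hinvS : ∀ y ∈ S, y⁻¹ ∈ S := by
    intro y hy
    rcases eq_or_ne y 0 with rfl | hy0
    · simpa using h0
    by_cases hyr : ∃ a : K, φ a = y
    · obtain ⟨a, rfl⟩ := hyr
      have := hKmem a⁻¹
      rwa [map_inv₀] at this
    · push_neg at hyr
      obtain ⟨c, hc0, hcm1⟩ := hex 0 (-1)
      have hc0' : φ c ≠ 0 := by simpa using hφinj.ne hc0
      have hc1 : c + 1 ≠ 0 := fun h => hcm1 (eq_neg_of_add_eq_zero_left h)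
      have hc1' : φ (c + 1) ≠ 0 := by simpa using hφinj.ne hc1
      have hy'S : y - φ c ∈ S := hsub y hy (φ c) (hKmem c)
      have hy'0 : y - φ c ≠ 0 := by
        intro h
        exact hyr c (by rw [sub_eq_zero] at h; exact h.symm)
      have hy'1 : (1 : L) ≠ y - φ c := by
        intro h
        apply hyr (1 + c)
        rw [map_add, map_one]
        rw [eq_sub_iff_add_eq] at h
        exact h
      have key : (y - φ c) + (φ (c + 1) - 1) * 1 = y := by
        rw [map_add, map_one]; ring
      have hden : (y - φ c) + (φ (c + 1) - 1) * 1 ≠ 0 := by rw [key]; exact hy0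
      have hclres := hcl 1 h1 (y - φ c) hy'S one_ne_zero hy'0 hy'1 (c + 1) hden
      rw [key] at hclres
      have hmem1 : φ (c + 1) - φ (c + 1) * 1 * (y - φ c) / y ∈ S :=
        hsub _ (hKmem (c + 1)) _ hclres
      have hmem2 := hscal ((c + 1) * c)⁻¹ _ hmem1
      have hstep : φ (c + 1) - φ (c + 1) * 1 * (y - φ c) / y = φ (c + 1) * φ c / y := by
        rw [eq_div_iff hy0]
        field_simp
        ring
      rw [hstep] at hmem2
      have heq : φ ((c + 1) * c)⁻¹ * (φ (c + 1) * φ c / y) = y⁻¹ := by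
        rw [map_inv₀, map_mul, div_eq_mul_inv, ← mul_assoc,
          inv_mul_cancel₀ (mul_ne_zero hc1' hc0'), one_mul]
      rwa [heq] at hmem2
  -- closure under x ↦ x*x*z
  have hx2y : ∀ x ∈ S, ∀ z ∈ S, x * x * z ∈ S := by
    intro x hx z hz
    rcases eq_or_ne x 0 with rfl | hx0
    · simpa using h0
    rcases eq_or_ne z 0 with rfl | hz0
    · simpa using h0
    rcases eq_or_ne (x * z) (-1) with hxz | hxz
    · have hrw : x * x * z = -x := by
        have h' : x * (x * z) = x * (-1) := by rw [hxz]
        calc x * x * z = x * (x * z) := by ring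
        _ = x * (-1) := h'
        _ = -x := by ring
      rw [hrw]; exact hneg x hx
    · have hzi : z⁻¹ ∈ S := hinvS z hz
      have hs : x + z⁻¹ ∈ S := hadd x hx _ hzi
      have hsne : x + z⁻¹ ≠ 0 := by
        intro h
        apply hxz
        have hx' : x = -z⁻¹ := eq_neg_of_add_eq_zero_left h
        rw [hx', neg_mul, inv_mul_cancel₀ hz0]
      have hd : x⁻¹ - (x + z⁻¹)⁻¹ ∈ S := hsub _ (hinvS x hx) _ (hinvS _ hs)
      have hinvd := hinvS _ hd
      have h1xz : 1 + x * z ≠ 0 := fun h => hxz (eq_neg_of_add_eq_zero_right h)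
      have hmul1 : (x⁻¹ - (x + z⁻¹)⁻¹) * (x * x * z + x) = 1 := by
        field_simp [h1xz]
        linear_combination (-(x * z)) * mul_inv_cancel₀ h1xz
      have hrw : (x⁻¹ - (x + z⁻¹)⁻¹)⁻¹ = x * x * z + x :=
        inv_eq_of_mul_eq_one_right hmul1
      rw [hrw] at hinvd
      have := hsub _ hinvd x hx
      simpa using this
  -- closure under multiplication
  have hmul : ∀ a ∈ S, ∀ b ∈ S, a * b ∈ S := by
    have hφ2 : φ (2 : K) = (2 : L) := by
      rw [show (2 : K) = 1 + 1 by norm_num, map_add, map_one]; norm_num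
    rcases eq_or_ne (2 : K) 0 with h2 | h2
    · -- characteristic 2
      have h2L : (2 : L) = 0 := by rw [← hφ2, h2, map_zero]
      have hsqmem : ∀ y : S, (y : L) * y ∈ S := fun y => by
        simpa using hx2y y y.2 1 h1
      have hinj : Function.Injective (fun p : S => (⟨(p : L) * p, hsqmem p⟩ : S)) := by
        intro u v h
        have h' : (u : L) * u = (v : L) * v := congrArg Subtype.val h
        have hz : ((u : L) + v) * ((u : L) + v) = 0 := by
          linear_combination h' + (((v : L) * v) + (u : L) * v) * h2L
        have huv : (u : L) + v = 0 := by
          rcases mul_eq_zero.mp hz with h'' | h'' <;> exact h''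
        have : (u : L) = v := by linear_combination huv - (v : L) * h2L
        exact Subtype.ext this
      have hsurj := Finite.injective_iff_surjective.mp hinj
      intro a ha b hb
      obtain ⟨s, hs⟩ := hsurj ⟨b, hb⟩
      have hss : (s : L) * s = b := congrArg Subtype.val hs
      have := hx2y s s.2 a ha
      rwa [show (s : L) * s * a = a * b by rw [hss]; ring] at this
    · -- characteristic ≠ 2
      intro a ha b hb
      have h2L : (2 : L) ≠ 0 := by
        rw [← hφ2]; simpa using hφinj.ne h2
      have m1 : (a + b) * (a + b) ∈ S := by
        simpa using hx2y (a + b) (hadd a ha b hb) 1 h1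
      have m2 : a * a ∈ S := by simpa using hx2y a ha 1 h1
      have m3 : b * b ∈ S := by simpa using hx2y b hb 1 h1
      have hmem := hscal (2 : K)⁻¹ _ (hsub _ (hsub _ m1 _ m2) _ m3)
      have heq : φ (2 : K)⁻¹ * ((a + b) * (a + b) - a * a - b * b) = a * b := by
        rw [map_inv₀, hφ2]
        field_simp
        ring
      rwa [heq] at hmem
  -- assemble the subfield
  let F : Subfield L :=
    { carrier := S
      zero_mem' := h0
      one_mem' := h1
      add_mem' := fun {a b} ha hb => hadd a ha b hb
      neg_mem' := fun {a} ha => hneg a ha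
      mul_mem' := fun {a b} ha hb => hmul a ha b hb
      inv_mem' := fun a ha => hinvS a ha }
  let E : IntermediateField K L := F.toIntermediateField fun x => hKmem x
  haveI : Fintype E := Fintype.ofFinite E
  have hq2 : 2 ≤ q := le_of_lt hq
  have hcardL : Fintype.card L = q ^ Module.finrank K L := by
    rw [Module.card_eq_pow_finrank (K := K) (V := L), hK]
  have hrankL : Module.finrank K L = n := by
    have := hcardL.symm.trans hL
    exact Nat.pow_right_injective hq2 this
  have hcardE : Fintype.card E = q ^ Module.finrank K E := by
    rw [Module.card_eq_pow_finrank (K := K) (V := E), hK]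
  have hdvd : Module.finrank K E ∣ n := by
    rw [← hrankL, ← Module.finrank_mul_finrank K E L]
    exact Dvd.intro _ rfl
  haveI : Fintype F := Fintype.ofFinite F
  refine ⟨F, rfl, Module.finrank K E, hdvd, ?_⟩
  rw [Nat.card_eq_fintype_card,
    show Fintype.card F = Fintype.card E from
      Fintype.card_congr (Equiv.subtypeEquivRight fun x => Iff.rfl), hcardE]
end

section
/- Let V be a vector space of dimension 3n over F_q and let A be a family of n-dimensional subspaces of V such that for any three distinct members E_i, E_j, E_k of A, the subspace E_k intersects E_i + E_j trivially (equivalently, any three distinct members span V and the sum is direct). Then |A| ≤ q^n + 2. -/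
theorem stmt8 (q n : ℕ) (K V : Type) [Field K] [Fintype K] (hK : Fintype.card K = q)
    [AddCommGroup V] [Module K V] [FiniteDimensional K V]
    (hdim : Module.finrank K V = 3 * n)
    (A : Set (Submodule K V))
    (hA : ∀ W ∈ A, Module.finrank K W = n)
    (hgen : ∀ E₁ ∈ A, ∀ E₂ ∈ A, ∀ E₃ ∈ A,
      E₁ ≠ E₂ → E₁ ≠ E₃ → E₂ ≠ E₃ → E₃ ⊓ (E₁ ⊔ E₂) = ⊥) :
    A.ncard ≤ q ^ n + 2 := by
  classical
  have hfinV : Finite V := Module.finite_of_finite K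
  have _ : Fintype V := Fintype.ofFinite V
  have hfinA : A.Finite := Set.toFinite A
  by_cases hsmall : A.ncard ≤ 2
  · omega
  push_neg at hsmall
  have hn : 1 ≤ n := by
    by_contra hn0
    have hn0 : n = 0 := by omega
    have hsub : A ⊆ {⊥} := by
      intro W hW
      have h1 := hA W hW
      rw [hn0] at h1
      have : W = ⊥ := Submodule.finrank_eq_zero.mp h1
      simp [this]
    have := Set.ncard_le_ncard hsub (Set.finite_singleton _)
    rw [Set.ncard_singleton] at this
    omega
  have hq : 2 ≤ q := hK ▸ Fintype.one_lt_card
  -- pairwise trivial intersection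
  have hdisj : ∀ E ∈ A, ∀ E' ∈ A, E ≠ E' → E ⊓ E' = ⊥ := by
    intro E hE E' hE' hne
    have hex : (A \ {E, E'}).Nonempty := by
      rw [Set.nonempty_iff_ne_empty]
      intro hemp
      have hsub : A ⊆ {E, E'} := by
        rw [Set.diff_eq_empty] at hemp; exact hemp
      have := Set.ncard_le_ncard hsub ((Set.finite_singleton E').insert E)
      have h2 : ({E, E'} : Set (Submodule K V)).ncard ≤ 2 := by
        apply le_trans (Set.ncard_insert_le _ _); simp
      omega
    obtain ⟨F, hF, hFne⟩ := hex
    simp only [Set.mem_insert_iff, Set.mem_singleton_iff, not_or] at hFne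
    have key := hgen E hE F hF E' hE' (fun h => hFne.1 h.symm) hne
      (fun h => hFne.2 h)
    have : E ⊓ E' ≤ E' ⊓ (E ⊔ F) := le_inf inf_le_right (le_trans inf_le_left le_sup_left)
    rw [key] at this
    exact le_bot_iff.mp this
  -- fix E₁
  obtain ⟨E₁, hE₁⟩ : A.Nonempty := by
    rw [Set.nonempty_iff_ne_empty]; intro h; rw [h] at hsmall; simp at hsmall
  -- dimension of sups
  have hfr : ∀ E ∈ A, E ≠ E₁ → Module.finrank K ↥(E ⊔ E₁) = 2 * n := by
    intro E hE hne
    have h1 := Submodule.finrank_sup_add_finrank_inf_eq E E₁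
    rw [hdisj E hE E₁ hE₁ hne, hA E hE, hA E₁ hE₁] at h1
    simp [finrank_bot] at h1
    omega
  -- key: intersections of sups
  have hsupinf : ∀ E ∈ A, ∀ E' ∈ A, E ≠ E₁ → E' ≠ E₁ → E ≠ E' →
      (E ⊔ E₁) ⊓ (E' ⊔ E₁) = E₁ := by
    intro E hE E' hE' hne1 hne1' hne
    have hb : E ⊓ (E' ⊔ E₁) = ⊥ := hgen E' hE' E₁ hE₁ E hE hne1' hne.symm hne1.symm
    calc (E ⊔ E₁) ⊓ (E' ⊔ E₁) = (E₁ ⊔ E) ⊓ (E' ⊔ E₁) := by rw [sup_comm]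
    _ = E₁ ⊔ (E ⊓ (E' ⊔ E₁)) := sup_inf_assoc_of_le E le_sup_right
    _ = E₁ := by rw [hb, sup_bot_eq]
  -- counting
  set s : Finset (Submodule K V) := hfinA.toFinset.erase E₁ with hs
  have cardW : ∀ W : Submodule K V, (W : Set V).toFinset.card = q ^ Module.finrank K W := by
    intro W
    rw [Set.toFinset_card]
    have := Module.card_eq_pow_finrank (K := K) (V := W)
    rw [hK] at this
    exact this
  set g : Submodule K V → Finset V :=
    fun E => Set.toFinset ((E ⊔ E₁ : Submodule K V) : Set V) \ Set.toFinset (E₁ : Set V)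
    with hg
  have hmemA : ∀ E ∈ s, E ∈ A ∧ E ≠ E₁ := by
    intro E hEs
    rw [hs, Finset.mem_erase, Set.Finite.mem_toFinset] at hEs
    exact ⟨hEs.2, hEs.1⟩
  have hgcard : ∀ E ∈ s, (g E).card = q ^ (2 * n) - q ^ n := by
    intro E hEs
    obtain ⟨hEA, hEne⟩ := hmemA E hEs
    rw [hg]
    rw [Finset.card_sdiff_of_subset (by
      intro v hv
      rw [Set.mem_toFinset] at *
      exact Submodule.mem_sup_right hv)]
    rw [cardW, cardW, hfr E hEA hEne, hA E₁ hE₁]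
  have hdisjg : (s : Set (Submodule K V)).PairwiseDisjoint g := by
    intro E hEs E' hEs' hne
    obtain ⟨hEA, hEne⟩ := hmemA E hEs
    obtain ⟨hEA', hEne'⟩ := hmemA E' hEs'
    simp only [Function.onFun]
    rw [Finset.disjoint_left]
    intro v hv hv'
    rw [hg] at hv hv'
    simp only [Finset.mem_sdiff, Set.mem_toFinset, SetLike.mem_coe] at hv hv'
    have : v ∈ (E ⊔ E₁) ⊓ (E' ⊔ E₁) := ⟨hv.1, hv'.1⟩
    rw [hsupinf E hEA E' hEA' hEne hEne' hne] at this
    exact hv.2 this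
  have hunion : (s.biUnion g).card = s.card * (q ^ (2 * n) - q ^ n) := by
    rw [Finset.card_biUnion (fun E hE E' hE' hne => hdisjg hE hE' hne)]
    rw [Finset.sum_congr rfl hgcard, Finset.sum_const, smul_eq_mul]
  have hsubuniv : s.biUnion g ⊆ Finset.univ \ Set.toFinset (E₁ : Set V) := by
    intro v hv
    rw [Finset.mem_biUnion] at hv
    obtain ⟨E, hEs, hvE⟩ := hv
    rw [hg] at hvE
    simp only [Finset.mem_sdiff, Set.mem_toFinset] at hvE ⊢
    exact ⟨Finset.mem_univ _, hvE.2⟩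
  have hcardV : (Finset.univ \ Set.toFinset (E₁ : Set V)).card = q ^ (3 * n) - q ^ n := by
    rw [Finset.card_sdiff_of_subset (Finset.subset_univ _), cardW, hA E₁ hE₁, Finset.card_univ]
    have := Module.card_eq_pow_finrank (K := K) (V := V)
    rw [hK, hdim] at this
    rw [this]
  have hineq : s.card * (q ^ (2 * n) - q ^ n) ≤ q ^ (3 * n) - q ^ n := by
    rw [← hunion, ← hcardV]
    exact Finset.card_le_card hsubuniv
  -- arithmetic
  set a := q ^ n with ha
  have ha2 : 2 ≤ a := le_trans hq (Nat.le_self_pow (by omega) q)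
  have h2n : q ^ (2 * n) = a ^ 2 := by rw [ha, ← pow_mul, Nat.mul_comm]
  have h3n : q ^ (3 * n) = a ^ 3 := by rw [ha, ← pow_mul, Nat.mul_comm]
  rw [h2n, h3n] at hineq
  have haa : a ≤ a ^ 2 := Nat.le_self_pow (by omega) a
  have haa3 : a ≤ a ^ 3 := Nat.le_self_pow (by omega) a
  have hfact : a ^ 3 - a = (a + 1) * (a ^ 2 - a) := by
    zify [haa, haa3]; ring
  rw [hfact] at hineq
  have hpos : 0 < a ^ 2 - a := by
    have h2 : a * 2 ≤ a * a := Nat.mul_le_mul_left a ha2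
    have hp2 : a ^ 2 = a * a := sq a
    omega
  have hscard : s.card ≤ a + 1 := Nat.le_of_mul_le_mul_right hineq hpos
  have hAcard : A.ncard = hfinA.toFinset.card := Set.ncard_eq_toFinset_card A hfinA
  have : s.card = hfinA.toFinset.card - 1 := by
    rw [hs, Finset.card_erase_of_mem (by rwa [Set.Finite.mem_toFinset])]
  omega
end

section
/- Let q be a prime power with q > 4 and let C be a nondegenerate conic in PG(2,q) with q even, with nucleus N. For any point P on C, the set (C ∪ {N}) \ {P} is not a conic. -/
open scoped LinearAlgebra.Projectivization

/-- A quadratic form on `F³` defines a nondegenerate (nonsingular) conic: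
it is nonzero and has no singular projective point. -/
def IsNondegConicForm (F : Type) [Field F]
    (Q : QuadraticForm F (Fin 3 → F)) : Prop :=
  Q ≠ 0 ∧ ∀ v : Fin 3 → F, v ≠ 0 → Q v = 0 →
    ∃ w : Fin 3 → F, QuadraticMap.polar (⇑Q) v w ≠ 0

open QuadraticMap Polynomial

variable {F : Type} [Field F]

lemma expand3 (Q : QuadraticForm F (Fin 3 → F)) (v1 v2 v3 : Fin 3 → F) (x y z : F) :
    Q (x • v1 + y • v2 + z • v3) =
      x * x * Q v1 + y * y * Q v2 + z * z * Q v3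
      + x * y * polar (⇑Q) v1 v2 + y * z * polar (⇑Q) v2 v3 + x * z * polar (⇑Q) v1 v3 := by
  rw [QuadraticMap.map_add (⇑Q) (x • v1 + y • v2) (z • v3),
      QuadraticMap.map_add (⇑Q) (x • v1) (y • v2)]
  simp only [polar_add_left, polar_smul_left, polar_smul_right, QuadraticMap.map_smul,
    smul_eq_mul]
  ring

lemma rep_zero_iff (Q' : QuadraticForm F (Fin 3 → F)) {u : Fin 3 → F} (hu : u ≠ 0) :
    Q' ((Projectivization.mk F u hu).rep) = 0 ↔ Q' u = 0 := by
  obtain ⟨α, hα⟩ := Projectivization.exists_smul_eq_mk_rep F u hu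
  rw [← hα, Units.smul_def, QuadraticMap.map_smul, smul_eq_mul]
  simp [mul_eq_zero, α.ne_zero]

theorem stmt14 (q h : ℕ) (hq4 : 4 < q) (hq : q = 2 ^ h)
    (F : Type) [Field F] [Fintype F] (hF : Fintype.card F = q)
    (Q : QuadraticForm F (Fin 3 → F)) (hQ : IsNondegConicForm F Q)
    (N : ℙ F (Fin 3 → F))
    (hN : ∀ w : Fin 3 → F, QuadraticMap.polar (⇑Q) N.rep w = 0)
    (P : ℙ F (Fin 3 → F)) (hP : Q P.rep = 0) :
    ¬ ∃ Q' : QuadraticForm F (Fin 3 → F), IsNondegConicForm F Q' ∧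
      ({p : ℙ F (Fin 3 → F) | Q p.rep = 0} ∪ {N}) \ {P} =
        {p : ℙ F (Fin 3 → F) | Q' p.rep = 0} := by
  classical
  rintro ⟨Q', hQ', hS⟩
  -- c := Q (N.rep) is nonzero
  have hc : Q N.rep ≠ 0 := by
    intro h0
    obtain ⟨w, hw⟩ := hQ.2 N.rep N.rep_nonzero h0
    exact hw (hN w)
  -- a direction w with polar Q P.rep w ≠ 0
  obtain ⟨w, hw⟩ := hQ.2 P.rep P.rep_nonzero hP
  set pa : F := polar (⇑Q) P.rep w with hpa
  -- second conic point v2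
  set v2 : Fin 3 → F := (-(Q w) / pa) • P.rep + w with hv2def
  have hQv2 : Q v2 = 0 := by
    rw [hv2def, QuadraticMap.map_add (⇑Q) _ w, QuadraticMap.map_smul, polar_smul_left,
      smul_eq_mul, smul_eq_mul, hP]
    field_simp
    rw [← hpa]; ring
  have ha2 : polar (⇑Q) P.rep v2 = pa := by
    rw [hv2def, polar_add_right, polar_smul_right, polar_self, hP]
    simp
    exact hpa.symm
  have hp13 : polar (⇑Q) P.rep N.rep = 0 := by rw [polar_comm]; exact hN _
  have hp23 : polar (⇑Q) v2 N.rep = 0 := by rw [polar_comm]; exact hN _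
  -- linear independence of P.rep, v2, N.rep
  have indep : ∀ α β γ : F, α • P.rep + β • v2 + γ • N.rep = 0 →
      α = 0 ∧ β = 0 ∧ γ = 0 := by
    intro α β γ hzero
    have hβ : β = 0 := by
      have h1 : polar (⇑Q) P.rep (α • P.rep + β • v2 + γ • N.rep) = 0 := by
        rw [hzero, polar_zero_right]
      rw [polar_add_right, polar_add_right, polar_smul_right, polar_smul_right,
        polar_smul_right, polar_self, hP, ha2, hp13] at h1
      simpa [hw] using h1
    subst hβ
    have hγ : γ = 0 := by
      have h2 : Q (α • P.rep + (0:F) • v2 + γ • N.rep) = 0 := by rw [hzero]; exact map_zero Q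
      rw [expand3, hP, hQv2, hp13, hp23] at h2
      have : γ * γ * Q N.rep = 0 := by linear_combination h2
      rcases mul_eq_zero.mp this with h | h
      · exact (mul_self_eq_zero).mp h
      · exact absurd h hc
    subst hγ
    refine ⟨?_, rfl, rfl⟩
    have : α • P.rep = 0 := by simpa using hzero
    rcases smul_eq_zero.mp this with h | h
    · exact h
    · exact absurd h P.rep_nonzero
  have hv2ne : v2 ≠ 0 := by
    intro h
    exact one_ne_zero ((indep 0 1 0 (by simp [h])).2.1)
  -- N ≠ P
  have hNP : N ≠ P := by
    intro hEq
    rw [hEq] at hc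
    exact hc hP
  -- transfer memberships
  have hC : Q' N.rep = 0 := by
    have : N ∈ ({p : ℙ F (Fin 3 → F) | Q p.rep = 0} ∪ {N}) \ {P} :=
      ⟨Or.inr rfl, by simpa using hNP⟩
    rw [hS] at this
    exact this
  have hB : Q' v2 = 0 := by
    have hne : Projectivization.mk F v2 hv2ne ≠ P := by
      intro hEq
      rw [← Projectivization.mk_rep P, Projectivization.mk_eq_mk_iff] at hEq
      obtain ⟨aU, haU⟩ := hEq
      have : (-(aU : F)) • P.rep + (1:F) • v2 + (0:F) • N.rep = 0 := by
        rw [← haU, Units.smul_def]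
        simp
      exact one_ne_zero (indep _ _ _ this).2.1
    have : Projectivization.mk F v2 hv2ne ∈
        ({p : ℙ F (Fin 3 → F) | Q p.rep = 0} ∪ {N}) \ {P} :=
      ⟨Or.inl ((rep_zero_iff Q hv2ne).mpr hQv2), by simpa using hne⟩
    rw [hS] at this
    exact (rep_zero_iff Q' hv2ne).mp this
  have hA : Q' P.rep ≠ 0 := by
    intro h0
    have : P ∈ ({p : ℙ F (Fin 3 → F) | Q p.rep = 0} ∪ {N}) \ {P} := by
      rw [hS]; exact h0
    exact this.2 rfl
  -- notation
  set a : F := polar (⇑Q) P.rep v2 with haa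
  have ha : a ≠ 0 := by rw [ha2]; exact hw
  set c : F := Q N.rep with hcc
  set A : F := Q' P.rep with hAA
  set D : F := polar (⇑Q') P.rep v2 with hDD
  set E : F := polar (⇑Q') v2 N.rep with hEE
  set G : F := polar (⇑Q') P.rep N.rep with hGG
  -- the cubic
  set g : F[X] := Polynomial.C (A * a) * X ^ 3 + Polynomial.C (G * a) * X ^ 2 +
      Polynomial.C (-(D * c)) * X + Polynomial.C (-(E * c)) with hg
  have key : ∀ s ∈ Finset.univ.erase (0:F), g.eval s = 0 := by
    intro s hs
    have hs0 : s ≠ 0 := (Finset.mem_erase.mp hs).1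
    set y : F := -c / (a * s) with hy'
    have hy : y * (a * s) + c = 0 := by
      rw [hy']; field_simp
      ring
    set u : Fin 3 → F := s • P.rep + y • v2 + (1:F) • N.rep with hu'
    have hQu : Q u = 0 := by
      rw [hu', expand3, hP, hQv2, hp13, hp23, ← haa, ← hcc]
      linear_combination hy
    have hune : u ≠ 0 := by
      intro h
      exact one_ne_zero (indep s y 1 (by rw [← hu', h])).2.2
    have hpsne : Projectivization.mk F u hune ≠ P := by
      intro hEq
      rw [← Projectivization.mk_rep P, Projectivization.mk_eq_mk_iff] at hEq
      obtain ⟨aU, haU⟩ := hEq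
      have h2 : ((aU : F)) • P.rep = s • P.rep + y • v2 + (1:F) • N.rep := by
        rw [← Units.smul_def, haU, hu']
      have : (s - (aU : F)) • P.rep + y • v2 + (1:F) • N.rep = 0 := by
        rw [sub_smul, h2]; abel
      exact one_ne_zero (indep _ _ _ this).2.2
    have hmem : Projectivization.mk F u hune ∈
        ({p : ℙ F (Fin 3 → F) | Q p.rep = 0} ∪ {N}) \ {P} :=
      ⟨Or.inl ((rep_zero_iff Q hune).mpr hQu), by simpa using hpsne⟩
    rw [hS] at hmem
    have hQ'u : Q' u = 0 := (rep_zero_iff Q' hune).mp hmem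
    rw [hu', expand3, hB, hC, ← hAA, ← hDD, ← hEE, ← hGG] at hQ'u
    rw [hg]
    simp only [eval_add, eval_mul, eval_pow, eval_C, eval_X]
    linear_combination (a * s) * hQ'u - (D * s + E) * hy
  have hdeg : g.natDegree ≤ 3 := by
    rw [hg]
    compute_degree
  have hcard : g.natDegree < (Finset.univ.erase (0:F)).card := by
    rw [Finset.card_erase_of_mem (Finset.mem_univ 0), Finset.card_univ, hF]
    omega
  have hg0 : g = 0 := eq_zero_of_natDegree_lt_card_of_eval_eq_zero' g _ key hcard
  have : g.coeff 3 = A * a := by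
    rw [hg]
    simp only [coeff_add, coeff_C_mul, coeff_X_pow, coeff_C, coeff_X, coeff_C_mul]
    norm_num
  rw [hg0] at this
  simp only [coeff_zero] at this
  rcases mul_eq_zero.mp this.symm with h' | h'
  · exact hA h'
  · exact ha h'
end
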